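/- (Lemma 4.2) Let M be a partial matrix over a field F and v a partial column on the same rows. If for every completion M̄ of M, no completion v̄ of v lies in the column space of M̄, then mr([v | M]) = mr(M) + 1. -/

import Mathlib

/-- `N` is a completion of the partial matrix `(M, Ω)`: it agrees with `M`
on all known positions `Ω`. -/
def IsCompletion {F m n : Type*} [Field F] (M : Matrix m n F) (Ω : Set (m × n))
    (N : Matrix m n F) : Prop :=
  ∀ p ∈ Ω, N p.1 p.2 = M p.1 p.2

/-- The minimum rank of the partial matrix `(M, Ω)`: the minimum of the ranks of
its completions. -/
noncomputable def mr {F m n : Type*} [Field F] [Fintype m] [Fintype n]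
    (M : Matrix m n F) (Ω : Set (m × n)) : ℕ :=
  sInf {r | ∃ N : Matrix m n F, IsCompletion M Ω N ∧ N.rank = r}

/-- The partial matrix `[u | A]`: the partial column `u` (with known row set `Ωu`)
adjoined as an extra (first) column to `A`. -/
def augMat {F m n : Type*} [Field F] (u : m → F) (A : Matrix m n F) :
    Matrix m (Unit ⊕ n) F :=
  Matrix.of fun i => Sum.elim (fun _ => u i) (A i)

/-- Known positions of the partial matrix `[u | A]`, inherited from `Ωu` and `ΩA`. -/
def augSet {m n : Type*} (Ωu : Set m) (ΩA : Set (m × n)) : Set (m × (Unit ⊕ n)) :=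
  {p | Sum.elim (fun _ => p.1 ∈ Ωu) (fun j => (p.1, j) ∈ ΩA) p.2}

/-- `zero (u, A) = 1`, as a proposition: every completion of `[u | A]` attaining the
minimum rank has zero `u`-column. -/
def zeroProp {F m n : Type*} [Field F] [Fintype m] [Fintype n]
    (u : m → F) (Ωu : Set m) (A : Matrix m n F) (ΩA : Set (m × n)) : Prop :=
  ∀ N : Matrix m (Unit ⊕ n) F, IsCompletion (augMat u A) (augSet Ωu ΩA) N →
    N.rank = mr (augMat u A) (augSet Ωu ΩA) → ∀ i, N i (Sum.inl ()) = 0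

section AuxRank
variable {F m n : Type*} [Field F] [Fintype m] [Fintype n]

lemma range_aug_cols (N : Matrix m (Unit ⊕ n) F) :
    Set.range N.transpose =
      insert (fun i => N i (Sum.inl ()))
        (Set.range (fun j : n => fun i : m => N i (Sum.inr j))) := by
  ext x
  constructor
  · rintro ⟨c, rfl⟩
    cases c with
    | inl u => cases u; left; rfl
    | inr j => right; exact ⟨j, rfl⟩
  · rintro (rfl | ⟨j, rfl⟩)
    · exact ⟨Sum.inl (), rfl⟩
    · exact ⟨Sum.inr j, rfl⟩

lemma rank_aug (N : Matrix m (Unit ⊕ n) F) :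
    N.rank = Module.finrank F (Submodule.span F
      (insert (fun i => N i (Sum.inl ()))
        (Set.range (fun j : n => fun i : m => N i (Sum.inr j))))) := by
  rw [Matrix.rank_eq_finrank_span_cols, ← range_aug_cols]
  rfl

lemma rank_restrict (N : Matrix m (Unit ⊕ n) F) :
    (Matrix.of fun i j => N i (Sum.inr j) : Matrix m n F).rank
      = Module.finrank F (Submodule.span F
        (Set.range (fun j : n => fun i : m => N i (Sum.inr j)))) := by
  rw [Matrix.rank_eq_finrank_span_cols]
  rfl

end AuxRank

/-- Lemma 4.2: if for every completion `N` of the partial matrix `M` no completion of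
the partial column `v` lies in the column space of `N`, then `mr [v | M] = mr M + 1`. -/
theorem mr_aug_eq_succ_of_not_col_space {F m n : Type*} [Field F] [Fintype m] [Fintype n]
    (M : Matrix m n F) (ΩM : Set (m × n)) (v : m → F) (Ωv : Set m)
    (h : ∀ N : Matrix m n F, IsCompletion M ΩM N →
      ∀ w : m → F, (∀ i ∈ Ωv, w i = v i) →
        w ∉ Submodule.span F (Set.range fun j : n => fun i : m => N i j)) :
    mr (augMat v M) (augSet Ωv ΩM) = mr M ΩM + 1 := by
  have hne : {r | ∃ N : Matrix m n F, IsCompletion M ΩM N ∧ N.rank = r}.Nonempty :=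
    ⟨M.rank, M, fun p _ => rfl, rfl⟩
  apply le_antisymm
  · -- upper bound
    obtain ⟨N', hN', hrk⟩ := Nat.sInf_mem hne
    set N : Matrix m (Unit ⊕ n) F := augMat v N' with hN
    have hcomp : IsCompletion (augMat v M) (augSet Ωv ΩM) N := by
      rintro ⟨i, c⟩ hp
      cases c with
      | inl u => rfl
      | inr j => exact hN' (i, j) hp
    have hle : N.rank ≤ mr M ΩM + 1 := by
      rw [rank_aug]
      have hcols : (fun j : n => fun i : m => N i (Sum.inr j)) = fun j i => N' i j := rfl
      have hv : (fun i => N i (Sum.inl ())) = v := rfl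
      rw [hcols, hv, Submodule.span_insert]
      refine le_trans (Submodule.finrank_add_le_finrank_add_finrank _ _) ?_
      have h1 : Module.finrank F (Submodule.span F {v} : Submodule F (m → F)) ≤ 1 := by
        by_cases hv0 : v = 0
        · subst hv0
          rw [Submodule.span_zero_singleton]
          simp
        · rw [finrank_span_singleton hv0]
      have h2 : Module.finrank F (Submodule.span F
          (Set.range fun j : n => fun i : m => N' i j)) ≤ mr M ΩM := by
        have : (Set.range fun j : n => fun i : m => N' i j) = Set.range N'.col := rfl
        rw [this, ← Matrix.rank_eq_finrank_span_cols, hrk]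
        exact le_refl _
      omega
    exact le_trans (Nat.sInf_le ⟨N, hcomp, rfl⟩) hle
  · -- lower bound
    refine le_csInf ⟨(augMat v M).rank, augMat v M, fun p _ => rfl, rfl⟩ ?_
    rintro r ⟨N, hNcomp, rfl⟩
    set w : m → F := fun i => N i (Sum.inl ()) with hw
    set N' : Matrix m n F := Matrix.of fun i j => N i (Sum.inr j) with hN'
    have hN'comp : IsCompletion M ΩM N' := by
      rintro ⟨i, j⟩ hp
      exact hNcomp (i, Sum.inr j) hp
    have hwv : ∀ i ∈ Ωv, w i = v i := fun i hi => hNcomp (i, Sum.inl ()) hi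
    have hwne := h N' hN'comp w hwv
    have hsub : (Submodule.span F (Set.range fun j : n => fun i : m => N i (Sum.inr j))) <
        Submodule.span F (insert w (Set.range fun j : n => fun i : m => N i (Sum.inr j))) := by
      refine lt_of_le_of_ne (Submodule.span_mono (Set.subset_insert _ _)) ?_
      intro heq
      exact hwne (heq ▸ Submodule.subset_span (Set.mem_insert _ _))
    have hlt := Submodule.finrank_lt_finrank_of_lt hsub
    have hmr : mr M ΩM ≤ Module.finrank F (Submodule.span F
        (Set.range fun j : n => fun i : m => N i (Sum.inr j))) := by
      have h0 : mr M ΩM ≤ N'.rank := Nat.sInf_le ⟨N', hN'comp, rfl⟩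
      rwa [hN', rank_restrict] at h0
    rw [rank_aug, ← hw]
    omega
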